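/- For any simple game on n voters, the total number of swings m = Σ_i η_i satisfies n ≤ m ≤ (⌊n/2⌋+1)·C(n, ⌊n/2⌋+1), where η_i is the number of i-swings of voter i. -/

import Mathlib

open Finset

structure SimpleGame (n : ℕ) where
  w : Finset (Fin n) → Bool
  mono : ∀ ⦃U V : Finset (Fin n)⦄, U ⊆ V → w U = true → w V = true
  empty_losing : w ∅ = false
  univ_winning : w Finset.univ = true

def isSwing {n : ℕ} (χ : Finset (Fin n) → Bool) (i : Fin n) (U : Finset (Fin n)) : Prop :=
  i ∉ U ∧ χ U = false ∧ χ (insert i U) = true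

instance {n : ℕ} (χ : Finset (Fin n) → Bool) (i : Fin n) : DecidablePred (isSwing χ i) :=
  fun U => by unfold isSwing; infer_instance

def eta {n : ℕ} (χ : Finset (Fin n) → Bool) (i : Fin n) : ℕ :=
  (Finset.univ.filter (isSwing χ i)).card

def totalSwings {n : ℕ} (χ : Finset (Fin n) → Bool) : ℕ := ∑ i, eta χ i

def BZ {n : ℕ} (χ : Finset (Fin n) → Bool) (i : Fin n) : ℚ :=
  (eta χ i : ℚ) / (totalSwings χ : ℚ)

def SS {n : ℕ} (χ : Finset (Fin n) → Bool) (i : Fin n) : ℚ :=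
  (∑ U ∈ Finset.univ.filter (isSwing χ i),
      (Nat.factorial U.card * Nat.factorial (n - U.card - 1) : ℚ)) / (Nat.factorial n : ℚ)



def pref {n : ℕ} (σ : Equiv.Perm (Fin n)) (k : ℕ) : Finset (Fin n) :=
  Finset.univ.filter fun x => ((σ.symm x : Fin n) : ℕ) < k

lemma mem_pref {n : ℕ} {σ : Equiv.Perm (Fin n)} {k : ℕ} {x : Fin n} :
    x ∈ pref σ k ↔ ((σ.symm x : Fin n) : ℕ) < k := by simp [pref]

lemma pref_zero {n : ℕ} (σ : Equiv.Perm (Fin n)) : pref σ 0 = ∅ := by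
  ext x; simp [mem_pref]

lemma pref_top {n : ℕ} (σ : Equiv.Perm (Fin n)) : pref σ n = Finset.univ := by
  ext x; simp [mem_pref, (σ.symm x).isLt]

lemma pref_mono {n : ℕ} (σ : Equiv.Perm (Fin n)) {a b : ℕ} (h : a ≤ b) :
    pref σ a ⊆ pref σ b := fun x hx => mem_pref.mpr (lt_of_lt_of_le (mem_pref.mp hx) h)

lemma pref_card {n : ℕ} (σ : Equiv.Perm (Fin n)) {k : ℕ} (hk : k ≤ n) :
    (pref σ k).card = k := by
  have : pref σ k = Finset.map ⟨fun a : Fin k => σ (Fin.castLE hk a), by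
      intro a b hab
      exact Fin.castLE_injective hk (σ.injective hab)⟩ Finset.univ := by
    ext x
    simp only [mem_pref, Finset.mem_map, Finset.mem_univ, true_and, Function.Embedding.coeFn_mk]
    constructor
    · intro h
      exact ⟨⟨(σ.symm x : Fin n), h⟩, by simp [Fin.castLE]⟩
    · rintro ⟨a, rfl⟩
      simp [Fin.castLE, a.isLt]
  rw [this, Finset.card_map, Finset.card_univ, Fintype.card_fin]

lemma pref_succ {n : ℕ} (σ : Equiv.Perm (Fin n)) {k : ℕ} (hk : k < n) :
    pref σ (k + 1) = insert (σ ⟨k, hk⟩) (pref σ k) := by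
  ext x
  simp only [mem_pref, Finset.mem_insert, Nat.lt_succ_iff_lt_or_eq]
  constructor
  · rintro (h | h)
    · exact Or.inr h
    · left
      have : σ.symm x = ⟨k, hk⟩ := Fin.ext h
      rw [← this, Equiv.apply_symm_apply]
  · rintro (rfl | h)
    · right; simp
    · exact Or.inl h

lemma pref_eq_iff {n : ℕ} (σ : Equiv.Perm (Fin n)) (c : ℕ) (U : Finset (Fin n)) :
    pref σ c = U ↔ ∀ j : Fin n, ((j : ℕ) < c ↔ σ j ∈ U) := by
  constructor
  · rintro rfl j
    simp [mem_pref]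
  · intro h
    ext x
    rw [mem_pref]
    have := h (σ.symm x)
    simpa using this

variable {n : ℕ}

def fwExists (G : SimpleGame n) (σ : Equiv.Perm (Fin n)) : ∃ m, G.w (pref σ m) = true :=
  ⟨n, by rw [pref_top]; exact G.univ_winning⟩

def firstWin (G : SimpleGame n) (σ : Equiv.Perm (Fin n)) : ℕ := Nat.find (fwExists G σ)

lemma firstWin_pos (G : SimpleGame n) (σ : Equiv.Perm (Fin n)) : 0 < firstWin G σ := by
  refine Nat.pos_of_ne_zero (fun h => ?_)
  have := Nat.find_spec (fwExists G σ)
  rw [show Nat.find (fwExists G σ) = firstWin G σ from rfl, h, pref_zero] at this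
  rw [G.empty_losing] at this
  exact Bool.false_ne_true this

lemma firstWin_le (G : SimpleGame n) (σ : Equiv.Perm (Fin n)) : firstWin G σ ≤ n :=
  Nat.find_le (show G.w (pref σ n) = true by rw [pref_top]; exact G.univ_winning)

lemma firstWin_sub_one_lt (G : SimpleGame n) (σ : Equiv.Perm (Fin n)) :
    firstWin G σ - 1 < n :=
  lt_of_lt_of_le (Nat.sub_lt (firstWin_pos G σ) one_pos) (firstWin_le G σ)

def gmap (G : SimpleGame n) (σ : Equiv.Perm (Fin n)) : Fin n × Finset (Fin n) :=
  (σ ⟨firstWin G σ - 1, firstWin_sub_one_lt G σ⟩, pref σ (firstWin G σ - 1))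

lemma gmap_isSwing (G : SimpleGame n) (σ : Equiv.Perm (Fin n)) :
    isSwing G.w (gmap G σ).1 (gmap G σ).2 := by
  set k := firstWin G σ - 1 with hk
  have hk1 : k + 1 = firstWin G σ := Nat.succ_pred_eq_of_pos (firstWin_pos G σ)
  refine ⟨?_, ?_, ?_⟩
  · intro hmem
    have := mem_pref.mp hmem
    rw [show (gmap G σ).1 = σ ⟨k, firstWin_sub_one_lt G σ⟩ from rfl, Equiv.symm_apply_apply] at this
    exact lt_irrefl k this
  · have hlt : k < firstWin G σ := by omega
    have := Nat.find_min (fwExists G σ) hlt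
    have h' : G.w (pref σ k) = false := by simpa using this
    exact h'
  · have : insert (σ ⟨k, firstWin_sub_one_lt G σ⟩) (pref σ k) = pref σ (k + 1) :=
      (pref_succ σ (firstWin_sub_one_lt G σ)).symm
    rw [show (gmap G σ).2 = pref σ k from rfl, show (gmap G σ).1 = σ ⟨k, _⟩ from rfl, this, hk1]
    exact Nat.find_spec (fwExists G σ)

lemma card_lt_of_not_mem {U : Finset (Fin n)} {i : Fin n} (hi : i ∉ U) : U.card < n := by
  have : U ⊂ Finset.univ := Finset.ssubset_univ_iff.mpr (by rintro rfl; exact hi (Finset.mem_univ i))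
  simpa using Finset.card_lt_card this

lemma gmap_eq_iff (G : SimpleGame n) (σ : Equiv.Perm (Fin n)) (i : Fin n) (U : Finset (Fin n))
    (hsw : isSwing G.w i U) :
    gmap G σ = (i, U) ↔ (pref σ U.card = U ∧ σ ⟨U.card, card_lt_of_not_mem hsw.1⟩ = i) := by
  constructor
  · intro h
    have h2 : pref σ (firstWin G σ - 1) = U := congrArg Prod.snd h
    have h1 : σ ⟨firstWin G σ - 1, firstWin_sub_one_lt G σ⟩ = i := congrArg Prod.fst h
    have hc : U.card = firstWin G σ - 1 := by
      rw [← h2, pref_card σ (le_of_lt (firstWin_sub_one_lt G σ))]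
    constructor
    · rw [hc]; exact h2
    · have heq : (⟨U.card, card_lt_of_not_mem hsw.1⟩ : Fin n)
          = ⟨firstWin G σ - 1, firstWin_sub_one_lt G σ⟩ := Fin.ext hc
      rw [heq]; exact h1
  · rintro ⟨h2, h1⟩
    set c := U.card with hc
    have hcn : c < n := card_lt_of_not_mem hsw.1
    -- firstWin = c + 1
    have hwin : G.w (pref σ (c+1)) = true := by
      rw [pref_succ σ hcn, h2, h1]; exact hsw.2.2
    have hle : firstWin G σ ≤ c + 1 := Nat.find_le hwin
    have hgt : ∀ m, m ≤ c → G.w (pref σ m) ≠ true := by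
      intro m hm hwm
      have : G.w U = true := G.mono (h2 ▸ pref_mono σ hm) hwm
      rw [hsw.2.1] at this; exact Bool.false_ne_true this
    have hge : c + 1 ≤ firstWin G σ := by
      by_contra hcon
      push_neg at hcon
      have : firstWin G σ ≤ c := by omega
      exact hgt _ this (Nat.find_spec (fwExists G σ))
    have hfw : firstWin G σ = c + 1 := le_antisymm hle hge
    have hk : firstWin G σ - 1 = c := by omega
    unfold gmap
    rw [show (⟨firstWin G σ - 1, firstWin_sub_one_lt G σ⟩ : Fin n) = ⟨c, hcn⟩ from Fin.ext hk,
      h1, hk, h2]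

lemma fiber_card {n : ℕ} (i : Fin n) (U : Finset (Fin n)) (hi : i ∉ U) :
    (Finset.univ.filter fun σ : Equiv.Perm (Fin n) =>
        pref σ U.card = U ∧ σ ⟨U.card, card_lt_of_not_mem hi⟩ = i).card
      = Nat.factorial U.card * Nat.factorial (n - 1 - U.card) := by
  classical
  set c := U.card with hcdef
  have hcn : c < n := card_lt_of_not_mem hi
  set Cs : Finset (Fin n) := (insert i U)ᶜ with hCs
  have hCscard : Cs.card = n - 1 - c := by
    rw [hCs, Finset.card_compl, Finset.card_insert_of_notMem hi, Fintype.card_fin]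
    omega
  have hmemCs : ∀ x : Fin n, x ∈ Cs ↔ (x ≠ i ∧ x ∉ U) := by
    intro x; rw [hCs]; simp [Finset.mem_compl, Finset.mem_insert, not_or]
  set P : Equiv.Perm (Fin n) → Prop :=
    fun σ => (∀ j : Fin n, ((j : ℕ) < c ↔ σ j ∈ U)) ∧ σ ⟨c, hcn⟩ = i with hP
  have hfilter : (Finset.univ.filter fun σ : Equiv.Perm (Fin n) =>
      pref σ U.card = U ∧ σ ⟨U.card, card_lt_of_not_mem hi⟩ = i)
      = Finset.univ.filter P := by
    apply Finset.filter_congr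
    intro σ _
    rw [hP, pref_eq_iff]
  rw [hfilter, ← Fintype.card_subtype]
  -- extra characterizations for elements of the fiber
  have keyi : ∀ (σ : Equiv.Perm (Fin n)), P σ → ∀ j : Fin n, ((j : ℕ) = c ↔ σ j = i) := by
    intro σ hσ j
    constructor
    · intro h; rw [show j = ⟨c, hcn⟩ from Fin.ext h]; exact hσ.2
    · intro h
      have := σ.injective (h.trans hσ.2.symm)
      exact congrArg Fin.val this
  have keyg : ∀ (σ : Equiv.Perm (Fin n)), P σ → ∀ j : Fin n, (c < (j : ℕ) ↔ σ j ∈ Cs) := by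
    intro σ hσ j
    rw [hmemCs]
    constructor
    · intro h
      refine ⟨fun he => by have := (keyi σ hσ j).2 he; omega,
              fun hu => by have := (hσ.1 j).2 hu; omega⟩
    · rintro ⟨h1, h2⟩
      have hne : (j : ℕ) ≠ c := fun he => h1 ((keyi σ hσ j).1 he)
      have hnl : ¬ ((j : ℕ) < c) := fun hl => h2 ((hσ.1 j).1 hl)
      omega
  -- forward map
  have mem1 : ∀ (σ : {σ : Equiv.Perm (Fin n) // P σ}) (a : Fin c),
      σ.1 ⟨a, a.2.trans hcn⟩ ∈ U := fun σ a => (σ.2.1 ⟨a, a.2.trans hcn⟩).1 a.2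
  have mem2 : ∀ (σ : {σ : Equiv.Perm (Fin n) // P σ}) (a : Fin (n - 1 - c)),
      σ.1 ⟨c + 1 + a, by omega⟩ ∈ Cs := by
    intro σ a
    exact (keyg σ.1 σ.2 ⟨c + 1 + a, by omega⟩).1 (by simp; omega)
  have bij1 : ∀ σ : {σ : Equiv.Perm (Fin n) // P σ},
      Function.Bijective (fun a : Fin c => (⟨σ.1 ⟨a, a.2.trans hcn⟩, mem1 σ a⟩ : {x // x ∈ U})) := by
    intro σ
    rw [Fintype.bijective_iff_injective_and_card]
    constructor
    · intro a b hab
      have h := σ.1.injective (Subtype.ext_iff.mp hab)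
      rw [Fin.mk.injEq] at h
      exact Fin.ext h
    · simp [Fintype.card_coe, hcdef]
  have bij2 : ∀ σ : {σ : Equiv.Perm (Fin n) // P σ},
      Function.Bijective (fun a : Fin (n - 1 - c) =>
        (⟨σ.1 ⟨c + 1 + a, by omega⟩, mem2 σ a⟩ : {x // x ∈ Cs})) := by
    intro σ
    rw [Fintype.bijective_iff_injective_and_card]
    constructor
    · intro a b hab
      have h := σ.1.injective (Subtype.ext_iff.mp hab)
      rw [Fin.mk.injEq] at h
      exact Fin.ext (by omega)
    · simp [Fintype.card_coe, hCscard]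
  set toB : {σ : Equiv.Perm (Fin n) // P σ} →
      (Fin c ≃ {x // x ∈ U}) × (Fin (n - 1 - c) ≃ {x // x ∈ Cs}) :=
    fun σ => (Equiv.ofBijective _ (bij1 σ), Equiv.ofBijective _ (bij2 σ)) with htoB
  have toB_inj : Function.Injective toB := by
    intro σ τ h
    have h1 := congrArg Prod.fst h
    have h2 := congrArg Prod.snd h
    apply Subtype.ext
    apply Equiv.ext
    intro j
    rcases lt_trichotomy (j : ℕ) c with hj | hj | hj
    · have h3 := Subtype.ext_iff.mp (DFunLike.congr_fun h1 ⟨j, hj⟩)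
      simp only [htoB, Equiv.ofBijective_apply] at h3
      exact h3
    · rw [show j = ⟨c, hcn⟩ from Fin.ext hj, σ.2.2, τ.2.2]
    · have ha : (j : ℕ) - c - 1 < n - 1 - c := by omega
      have h3 := Subtype.ext_iff.mp (DFunLike.congr_fun h2 ⟨(j : ℕ) - c - 1, ha⟩)
      simp only [htoB, Equiv.ofBijective_apply] at h3
      have hjj : (⟨c + 1 + ((⟨(j : ℕ) - c - 1, ha⟩ : Fin (n - 1 - c)) : ℕ), by omega⟩ : Fin n) = j :=
        Fin.ext (by simp only []; omega)
      rwa [hjj] at h3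
  -- backward map
  have toA_data : ∀ fg : (Fin c ≃ {x // x ∈ U}) × (Fin (n - 1 - c) ≃ {x // x ∈ Cs}),
      ∃ σ : {σ : Equiv.Perm (Fin n) // P σ},
        (∀ a : Fin c, σ.1 ⟨a, a.2.trans hcn⟩ = (fg.1 a : Fin n)) ∧
        (∀ a : Fin (n - 1 - c), σ.1 ⟨c + 1 + a, by omega⟩ = (fg.2 a : Fin n)) := by
    rintro ⟨f, g⟩
    set F : Fin n → Fin n := fun j =>
      if h : (j : ℕ) < c then (f ⟨j, h⟩ : Fin n)
      else if h2 : (j : ℕ) = c then i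
      else (g ⟨(j : ℕ) - c - 1, by omega⟩ : Fin n) with hF
    have hFU : ∀ j : Fin n, ((j : ℕ) < c ↔ F j ∈ U) := by
      intro j
      constructor
      · intro h; rw [hF]; simp only [dif_pos h]; exact (f ⟨j, h⟩).2
      · intro h
        by_contra hlt
        rcases eq_or_ne ((j : ℕ)) c with he | he
        · rw [hF] at h; simp only [dif_neg hlt, dif_pos he] at h; exact hi h
        · rw [hF] at h; simp only [dif_neg hlt, dif_neg he] at h
          have hg := (g ⟨(j : ℕ) - c - 1, by omega⟩).2
          rw [hmemCs] at hg
          exact hg.2 h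
    have hFi : ∀ j : Fin n, ((j : ℕ) = c ↔ F j = i) := by
      intro j
      constructor
      · intro h; rw [hF]; simp only [dif_neg (by omega : ¬ ((j:ℕ) < c)), dif_pos h]
      · intro h
        by_contra he
        rcases lt_or_gt_of_ne he with hl | hg'
        · have := (hFU j).1 hl
          rw [h] at this
          exact hi this
        · rw [hF] at h
          simp only [dif_neg (by omega : ¬ ((j:ℕ) < c)), dif_neg he] at h
          have hg := (g ⟨(j : ℕ) - c - 1, by omega⟩).2
          rw [hmemCs] at hg
          exact hg.1 h
    have hFg : ∀ j : Fin n, (hj : c < (j : ℕ)) →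
        F j = (g ⟨(j : ℕ) - c - 1, by omega⟩ : Fin n) := by
      intro j hj
      rw [hF]
      simp only [dif_neg (by omega : ¬ ((j:ℕ) < c)), dif_neg (by omega : ¬ ((j:ℕ) = c))]
    have Finj : Function.Injective F := by
      intro j k hjk
      rcases lt_trichotomy ((j : ℕ)) c with hj | hj | hj
      · have hk : (k : ℕ) < c := (hFU k).2 (hjk ▸ (hFU j).1 hj)
        rw [hF] at hjk
        simp only [dif_pos hj, dif_pos hk] at hjk
        have := f.injective (Subtype.ext hjk)
        rw [Fin.mk.injEq] at this
        exact Fin.ext this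
      · have hk : (k : ℕ) = c := (hFi k).2 (hjk ▸ (hFi j).1 hj)
        exact Fin.ext (by omega)
      · have hknl : ¬ ((k : ℕ) < c) := by
          intro hk
          have : F k ∈ U := (hFU k).1 hk
          rw [← hjk, ← hFU j] at this
          omega
        have hkne : (k : ℕ) ≠ c := by
          intro hk
          have : F k = i := (hFi k).1 hk
          rw [← hjk, ← hFi j] at this
          omega
        have hk : c < (k : ℕ) := by omega
        rw [hFg j hj, hFg k hk] at hjk
        have := g.injective (Subtype.ext hjk)
        rw [Fin.mk.injEq] at this
        exact Fin.ext (by omega)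
    set σ : Equiv.Perm (Fin n) := Equiv.ofBijective F (Finite.injective_iff_bijective.mp Finj)
      with hσ
    have hσapp : ∀ j, σ j = F j := fun j => rfl
    have hPσ : P σ := by
      constructor
      · intro j; rw [hσapp]; exact hFU j
      · rw [hσapp]; exact (hFi ⟨c, hcn⟩).1 rfl
    refine ⟨⟨σ, hPσ⟩, ?_, ?_⟩
    · intro a
      rw [hσapp, hF]
      simp only [dif_pos a.2]
    · intro a
      have h1 : c < ((⟨c + 1 + (a : ℕ), by omega⟩ : Fin n) : ℕ) := by
        show c < c + 1 + (a : ℕ); omega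
      rw [hσapp, hFg _ h1]
      have h2 : (⟨((⟨c + 1 + (a : ℕ), by omega⟩ : Fin n) : ℕ) - c - 1, by omega⟩
          : Fin (n - 1 - c)) = a := by
        apply Fin.ext
        show c + 1 + (a : ℕ) - c - 1 = (a : ℕ)
        omega
      rw [h2]
  choose toA hA1 hA2 using toA_data
  have toA_inj : Function.Injective toA := by
    intro fg fg' h
    have hval : ∀ j : Fin n, (toA fg).1 j = (toA fg').1 j := by
      intro j
      rw [h]
    ext
    · rename_i a
      have e1 := hA1 fg a
      have e2 := hA1 fg' a
      rw [hval _] at e1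
      have : (fg.1 a : Fin n) = (fg'.1 a : Fin n) := e1.symm.trans e2
      exact congrArg Fin.val this
    · rename_i a
      have e1 := hA2 fg a
      have e2 := hA2 fg' a
      rw [hval _] at e1
      have : (fg.2 a : Fin n) = (fg'.2 a : Fin n) := e1.symm.trans e2
      exact congrArg Fin.val this
  have hcard : Fintype.card {σ : Equiv.Perm (Fin n) // P σ}
      = Fintype.card ((Fin c ≃ {x // x ∈ U}) × (Fin (n - 1 - c) ≃ {x // x ∈ Cs})) :=
    le_antisymm (Fintype.card_le_of_injective toB toB_inj)
      (Fintype.card_le_of_injective toA toA_inj)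
  rw [hcard, Fintype.card_prod,
    Fintype.card_equiv (Fintype.equivOfCardEq (by simp [Fintype.card_coe, hcdef])),
    Fintype.card_equiv (Fintype.equivOfCardEq (by simp [Fintype.card_coe, hCscard])),
    Fintype.card_fin, Fintype.card_fin]

section Main
variable {n : ℕ} (G : SimpleGame n)

def swingSet (G : SimpleGame n) : Finset (Fin n × Finset (Fin n)) :=
  Finset.univ.filter fun p => isSwing G.w p.1 p.2

lemma swingSet_card : (swingSet G).card = totalSwings G.w := by
  classical
  rw [totalSwings]
  rw [Finset.card_eq_sum_card_fiberwise
    (f := Prod.fst) (t := Finset.univ) (fun p _ => Finset.mem_univ _)]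
  apply Finset.sum_congr rfl
  intro i _
  rw [eta]
  apply Finset.card_bij (fun p _ => p.2)
  · intro p hp
    simp only [swingSet, Finset.mem_filter, Finset.mem_univ, true_and] at hp
    simp only [Finset.mem_filter, Finset.mem_univ, true_and]
    rw [← hp.2]; exact hp.1
  · intro p hp q hq hpq
    simp only [swingSet, Finset.mem_filter, Finset.mem_univ, true_and] at hp hq
    exact Prod.ext (hp.2.trans hq.2.symm) hpq
  · intro U hU
    simp only [Finset.mem_filter, Finset.mem_univ, true_and] at hU
    exact ⟨(i, U), by simp [swingSet, hU], rfl⟩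

lemma sum_factorial_swings :
    ∑ p ∈ swingSet G, Nat.factorial p.2.card * Nat.factorial (n - 1 - p.2.card)
      = Nat.factorial n := by
  classical
  have h := Finset.card_eq_sum_card_fiberwise
    (f := gmap G) (s := (Finset.univ : Finset (Equiv.Perm (Fin n)))) (t := swingSet G)
    (fun σ _ => by
      simp only [swingSet, Finset.mem_coe, Finset.mem_filter, Finset.mem_univ, true_and]
      exact gmap_isSwing G σ)
  rw [Finset.card_univ, Fintype.card_perm, Fintype.card_fin] at h
  rw [h]
  apply Finset.sum_congr rfl
  intro p hp
  symm
  have hsw : isSwing G.w p.1 p.2 := by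
    simpa [swingSet] using hp
  have : (Finset.univ.filter fun σ : Equiv.Perm (Fin n) => gmap G σ = p)
      = Finset.univ.filter fun σ : Equiv.Perm (Fin n) =>
          pref σ p.2.card = p.2 ∧ σ ⟨p.2.card, card_lt_of_not_mem hsw.1⟩ = p.1 := by
    apply Finset.filter_congr
    intro σ _
    exact gmap_eq_iff G σ p.1 p.2 hsw
  rw [this, fiber_card p.1 p.2 hsw.1]

end Main

theorem totalSwings_bounds {n : ℕ} (G : SimpleGame n) :
    n ≤ totalSwings G.w ∧
    totalSwings G.w ≤ (n / 2 + 1) * Nat.choose n (n / 2 + 1) := by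
  classical
  rcases Nat.eq_zero_or_pos n with rfl | hn
  · exfalso
    have := G.univ_winning
    rw [Finset.univ_eq_empty, G.empty_losing] at this
    exact Bool.false_ne_true this
  have hsum := sum_factorial_swings G
  have hScard := swingSet_card G
  have hmem_le : ∀ p ∈ swingSet G, p.2.card ≤ n - 1 := by
    intro p hp
    have hsw : isSwing G.w p.1 p.2 := by simpa [swingSet] using hp
    have := card_lt_of_not_mem hsw.1
    omega
  constructor
  · -- lower bound
    have hle : Nat.factorial n ≤ (swingSet G).card * Nat.factorial (n - 1) := by
      rw [← hsum]
      calc ∑ p ∈ swingSet G, Nat.factorial p.2.card * Nat.factorial (n - 1 - p.2.card)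
          ≤ ∑ _p ∈ swingSet G, Nat.factorial (n - 1) := by
            apply Finset.sum_le_sum
            intro p hp
            exact Nat.le_of_dvd (Nat.factorial_pos _)
              (Nat.factorial_mul_factorial_dvd_factorial (hmem_le p hp))
        _ = (swingSet G).card * Nat.factorial (n - 1) := by
            rw [Finset.sum_const, smul_eq_mul]
    have hfact : Nat.factorial n = n * Nat.factorial (n - 1) := by
      conv_lhs => rw [show n = (n - 1) + 1 by omega]
      rw [Nat.factorial_succ]
      congr 1
      omega
    rw [hfact] at hle
    rw [← hScard]
    exact Nat.le_of_mul_le_mul_right (by linarith [hle]) (Nat.factorial_pos (n - 1))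
  · -- upper bound
    set C := Nat.choose (n - 1) ((n - 1) / 2) with hC
    have hkey : ∀ p ∈ swingSet G,
        Nat.factorial (n - 1) ≤
          C * (Nat.factorial p.2.card * Nat.factorial (n - 1 - p.2.card)) := by
      intro p hp
      have h1 : Nat.choose (n - 1) p.2.card * Nat.factorial p.2.card
          * Nat.factorial (n - 1 - p.2.card) = Nat.factorial (n - 1) :=
        Nat.choose_mul_factorial_mul_factorial (hmem_le p hp)
      have h2 : Nat.choose (n - 1) p.2.card ≤ C := Nat.choose_le_middle _ _
      calc Nat.factorial (n - 1)
          = Nat.choose (n - 1) p.2.card * (Nat.factorial p.2.card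
              * Nat.factorial (n - 1 - p.2.card)) := by rw [← h1]; ring
        _ ≤ C * (Nat.factorial p.2.card * Nat.factorial (n - 1 - p.2.card)) :=
            Nat.mul_le_mul_right _ h2
    have hle : (swingSet G).card * Nat.factorial (n - 1) ≤ C * Nat.factorial n := by
      calc (swingSet G).card * Nat.factorial (n - 1)
          = ∑ _p ∈ swingSet G, Nat.factorial (n - 1) := by
            rw [Finset.sum_const, smul_eq_mul]
        _ ≤ ∑ p ∈ swingSet G, C * (Nat.factorial p.2.card
              * Nat.factorial (n - 1 - p.2.card)) := Finset.sum_le_sum hkey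
        _ = C * ∑ p ∈ swingSet G, Nat.factorial p.2.card
              * Nat.factorial (n - 1 - p.2.card) := by rw [Finset.mul_sum]
        _ = C * Nat.factorial n := by rw [hsum]
    have hfact : Nat.factorial n = n * Nat.factorial (n - 1) := by
      conv_lhs => rw [show n = (n - 1) + 1 by omega]
      rw [Nat.factorial_succ]
      congr 1
      omega
    rw [hfact, ← Nat.mul_assoc] at hle
    have hcard_le : (swingSet G).card ≤ C * n :=
      Nat.le_of_mul_le_mul_right (by linarith [hle]) (Nat.factorial_pos (n - 1))
    rw [← hScard]
    refine hcard_le.trans (le_of_eq ?_)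
    -- C * n = (n/2+1) * choose n (n/2+1)
    rw [hC]
    rcases Nat.even_or_odd n with he | ho
    · obtain ⟨t, rfl⟩ := he
      rw [show t + t = 2 * t by ring]
      have ht : 0 < t := by omega
      have h1 : (2 * t - 1) / 2 = t - 1 := by omega
      have h2 : 2 * t - 1 + 1 = 2 * t := by omega
      have h3 : 2 * t / 2 = t := by omega
      rw [h1, h3]
      have := Nat.add_one_mul_choose_eq (2 * t - 1) (t - 1)
      rw [h2, show t - 1 + 1 = t by omega] at this
      -- this : 2*t * choose (2*t-1) (t-1) = choose (2*t) t * t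
      have h4 : Nat.choose (2 * t) (t + 1) * (t + 1) = Nat.choose (2 * t) t * t := by
        rw [Nat.choose_succ_right_eq]
        congr 1
        omega
      calc Nat.choose (2 * t - 1) (t - 1) * (2 * t)
          = 2 * t * Nat.choose (2 * t - 1) (t - 1) := by ring
        _ = Nat.choose (2 * t) t * t := this
        _ = Nat.choose (2 * t) (t + 1) * (t + 1) := h4.symm
        _ = (t + 1) * Nat.choose (2 * t) (t + 1) := by ring
    · obtain ⟨t, rfl⟩ := ho
      have h1 : (2 * t + 1 - 1) / 2 = t := by omega
      have h2 : (2 * t + 1) / 2 = t := by omega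
      rw [h1, h2]
      have := Nat.add_one_mul_choose_eq (2 * t) t
      calc Nat.choose (2 * t + 1 - 1) t * (2 * t + 1)
          = (2 * t + 1) * Nat.choose (2 * t) t := by
            rw [show 2 * t + 1 - 1 = 2 * t by omega]; ring
        _ = Nat.choose (2 * t + 1) (t + 1) * (t + 1) := this
        _ = (t + 1) * Nat.choose (2 * t + 1) (t + 1) := by ring
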